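/- Let g(z) = z(exp(z) − 1)/(exp(z) − z − 1) for z > 0. Then for every z > 0 the derivative of g at z equals exp(z)·(2·cosh(z) − 2 − z²)/(exp(z) − z − 1)², this quantity is strictly positive, and consequently g is strictly increasing on (0, ∞). -/

import Mathlib

open Real Filter Set

lemma ks_den_pos {z : ℝ} (hz : 0 < z) : 0 < Real.exp z - z - 1 := by
  have := Real.add_one_lt_exp (ne_of_gt hz)
  linarith

lemma ks_num_pos {z : ℝ} (hz : 0 < z) : 0 < 2 * Real.cosh z - 2 - z ^ 2 := by
  have key : StrictMonoOn (fun z : ℝ => 2 * Real.cosh z - 2 - z ^ 2) (Set.Ici 0) := by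
    apply strictMonoOn_of_deriv_pos (convex_Ici 0)
    · fun_prop
    · intro x hx
      rw [interior_Ici] at hx
      have hd : HasDerivAt (fun z : ℝ => 2 * Real.cosh z - 2 - z ^ 2)
          (2 * Real.sinh x - 2 * x) x := by
        have := ((Real.hasDerivAt_cosh x).const_mul 2).sub_const 2
        have h2 : HasDerivAt (fun z : ℝ => z ^ 2) (2 * x) x := by
          simpa using (hasDerivAt_pow 2 x)
        exact this.sub h2
      rw [hd.deriv]
      have : x < Real.sinh x := Real.self_lt_sinh_iff.mpr hx
      linarith
  have := key (Set.self_mem_Ici) (Set.mem_Ici.mpr hz.le) hz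
  simpa using this

lemma ks_hasDeriv {z : ℝ} (hz : 0 < z) :
    HasDerivAt (fun z : ℝ => z * (Real.exp z - 1) / (Real.exp z - z - 1))
      (Real.exp z * (2 * Real.cosh z - 2 - z ^ 2) / (Real.exp z - z - 1) ^ 2) z := by
  have hden := ks_den_pos hz
  have h1 : HasDerivAt (fun z : ℝ => z * (Real.exp z - 1))
      (1 * (Real.exp z - 1) + z * Real.exp z) z :=
    (hasDerivAt_id z).mul ((Real.hasDerivAt_exp z).sub_const 1)
  have h2 : HasDerivAt (fun z : ℝ => Real.exp z - z - 1) (Real.exp z - 1) z := by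
    simpa using ((Real.hasDerivAt_exp z).sub (hasDerivAt_id z)).sub_const 1
  have := h1.div h2 (ne_of_gt hden)
  refine this.congr_deriv ?_
  rw [Real.cosh_eq]
  have hexp : Real.exp (-z) = (Real.exp z)⁻¹ := Real.exp_neg z
  have he : Real.exp z ≠ 0 := (Real.exp_pos z).ne'
  rw [hexp]
  field_simp
  ring

theorem karpSipser_deriv_g_pos :
    (∀ z : ℝ, 0 < z →
      deriv (fun z : ℝ => z * (Real.exp z - 1) / (Real.exp z - z - 1)) z
        = Real.exp z * (2 * Real.cosh z - 2 - z ^ 2) / (Real.exp z - z - 1) ^ 2 ∧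
      0 < Real.exp z * (2 * Real.cosh z - 2 - z ^ 2) / (Real.exp z - z - 1) ^ 2) ∧
    StrictMonoOn (fun z : ℝ => z * (Real.exp z - 1) / (Real.exp z - z - 1)) (Set.Ioi 0) := by
  have hpos : ∀ z : ℝ, 0 < z →
      0 < Real.exp z * (2 * Real.cosh z - 2 - z ^ 2) / (Real.exp z - z - 1) ^ 2 := fun z hz =>
    div_pos (mul_pos (Real.exp_pos z) (ks_num_pos hz)) (pow_pos (ks_den_pos hz) 2)
  constructor
  · exact fun z hz => ⟨(ks_hasDeriv hz).deriv, hpos z hz⟩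
  · apply strictMonoOn_of_deriv_pos (convex_Ioi 0)
    · intro x hx
      exact (ks_hasDeriv hx).continuousAt.continuousWithinAt
    · intro x hx
      rw [interior_Ioi] at hx
      rw [(ks_hasDeriv hx).deriv]
      exact hpos x hx
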